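/- For every single-elimination tournament T with n players and every scoring system σ, the metric dimension satisfies dim(T,σ) ≤ n − 1. -/

import Mathlib

namespace SETour

variable {V : Type*}

/-- `a` is a player, i.e. a source of the digraph. -/
def IsPlayer (adj : V → V → Prop) (a : V) : Prop := ∀ u, ¬ adj u a

/-- `x` is a match, i.e. a non-source vertex. -/
def IsMatch (adj : V → V → Prop) (x : V) : Prop := ¬ IsPlayer adj x

/-- `z` is a sink, i.e. has no out-neighbors. -/
def IsSink (adj : V → V → Prop) (z : V) : Prop := ∀ w, ¬ adj z w

/-- A single-elimination tournament: exactly one sink, every non-sink vertex has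
exactly one out-neighbor (at most one out-neighbor in general), no directed cycles,
and no vertex has exactly one in-neighbor. -/
structure IsSETournament (adj : V → V → Prop) : Prop where
  unique_sink : ∃! z, IsSink adj z
  out_unique : ∀ ⦃v w w'⦄, adj v w → adj v w' → w = w'
  acyclic : ∀ v, ¬ Relation.TransGen adj v v
  in_ne_one : ∀ v, {u | adj u v}.ncard ≠ 1

/-- The set of players of the tournament. -/
def players (adj : V → V → Prop) : Set V := {a | IsPlayer adj a}

/-- The player set `P(u)`: all players having a directed walk to `u`. -/
def playerSet (adj : V → V → Prop) (u : V) : Set V :=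
  {a | IsPlayer adj a ∧ Relation.ReflTransGen adj a u}

/-- A bracket: a function from vertices to players fixing players, in which the
winner of each match is the winner of one of the matches feeding into it. -/
structure IsBracket (adj : V → V → Prop) (B : V → V) : Prop where
  toPlayer : ∀ v, IsPlayer adj (B v)
  player_fix : ∀ a, IsPlayer adj a → B a = a
  match_pred : ∀ x, IsMatch adj x → ∃ u, adj u x ∧ B x = B u

/-- A scoring system: positive reals on matches. -/
def IsScoring (adj : V → V → Prop) (σ : V → ℝ) : Prop :=
  ∀ x, IsMatch adj x → 0 < σ x

/-- The σ-score of two brackets: the sum of σ over the matches on which they agree. -/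
noncomputable def score (adj : V → V → Prop) (σ : V → ℝ) (B B' : V → V) : ℝ :=
  ∑ᶠ x ∈ {x | IsMatch adj x ∧ B x = B' x}, σ x

/-- A set of brackets is σ-resolving if any two distinct brackets are
distinguished by their σ-score against some member of the set. -/
def IsResolving (adj : V → V → Prop) (σ : V → ℝ) (𝓑 : Set (V → V)) : Prop :=
  ∀ B B' : V → V, IsBracket adj B → IsBracket adj B' → B ≠ B' →
    ∃ Bi ∈ 𝓑, score adj σ Bi B ≠ score adj σ Bi B'

/-- The metric dimension: minimum size of a σ-resolving set of brackets. -/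
noncomputable def dimT (adj : V → V → Prop) (σ : V → ℝ) : ℕ :=
  sInf {n | ∃ 𝓑 : Set (V → V), (∀ B ∈ 𝓑, IsBracket adj B) ∧
    IsResolving adj σ 𝓑 ∧ 𝓑.ncard = n}

/-- The resolving number: minimum `r` such that every set of `r` distinct
brackets is σ-resolving. -/
noncomputable def resT (adj : V → V → Prop) (σ : V → ℝ) : ℕ :=
  sInf {r | ∀ 𝓑 : Set (V → V), (∀ B ∈ 𝓑, IsBracket adj B) → 𝓑.ncard = r →
    IsResolving adj σ 𝓑}

/-- `x` is the match where players `a` and `b` face off: it has in-neighbors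
`u_a, u_b` with `P(u_a) ∩ {a,b} = {a}` and `P(u_b) ∩ {a,b} = {b}`. -/
def IsPairMatch (adj : V → V → Prop) (a b x : V) : Prop :=
  ∃ ua ub, adj ua x ∧ adj ub x ∧
    playerSet adj ua ∩ {a, b} = {a} ∧ playerSet adj ub ∩ {a, b} = {b}

open Classical in
/-- The bracket obtained from `B` by making player `a` win every match it can. -/
noncomputable def favBracket (adj : V → V → Prop) (B : V → V) (a : V) : V → V :=
  fun u => if a ∈ playerSet adj u then a else B u

/-- A scoring system has distinct subset sums if distinct sets of matches have
distinct total scores. -/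
def DistinctSubsetSums (adj : V → V → Prop) (σ : V → ℝ) : Prop :=
  ∀ M M' : Set V, (∀ x ∈ M, IsMatch adj x) → (∀ x ∈ M', IsMatch adj x) →
    ∑ᶠ x ∈ M, σ x = ∑ᶠ x ∈ M', σ x → M = M'

/-- The quantity `max_{x ∈ M(T)} (|P(x)| − max_{u ∈ N⁻(x)} |P(u)|)`. -/
noncomputable def lbound (adj : V → V → Prop) : ℕ :=
  sSup {k | ∃ x, IsMatch adj x ∧
    k = (playerSet adj x).ncard - sSup {m | ∃ u, adj u x ∧ m = (playerSet adj u).ncard}}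

/-- The vertex set of the sub-tournament `T_u`: vertices `v` with `P(v) ⊆ P(u)`. -/
def subVert (adj : V → V → Prop) (u : V) : Set V :=
  {v | playerSet adj v ⊆ playerSet adj u}

/-- The adjacency relation of the sub-tournament `T_u`. -/
def subAdj (adj : V → V → Prop) (u : V) : subVert adj u → subVert adj u → Prop :=
  fun v w => adj v.1 w.1

/-- A standard single-elimination tournament: one obtained from a complete
(perfect) binary tree by orienting all edges towards its root.  Equivalently, a
single-elimination tournament in which every match has exactly two in-neighbors
and all players are at the same distance from the sink (witnessed by a depth
function decreasing by 1 along every edge and constant on players). -/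
def IsStandard (adj : V → V → Prop) : Prop :=
  IsSETournament adj ∧
  (∀ x, IsMatch adj x → {u | adj u x}.ncard = 2) ∧
  ∃ (d : V → ℕ) (r : ℕ), (∀ v w, adj v w → d v = d w + 1) ∧
    ∀ a, IsPlayer adj a → d a = r

section Statement1Aux

variable {adj : V → V → Prop}

private lemma st1_total (hT : IsSETournament adj) {a x y : V}
    (hx : Relation.ReflTransGen adj a x) (hy : Relation.ReflTransGen adj a y) :
    Relation.ReflTransGen adj x y ∨ Relation.ReflTransGen adj y x :=
  Relation.ReflTransGen.total_of_right_unique (fun _ _ _ h1 h2 => hT.out_unique h1 h2) hx hy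

private lemma st1_antisymm (hT : IsSETournament adj) {x y : V}
    (hxy : Relation.ReflTransGen adj x y) (hyx : Relation.ReflTransGen adj y x) : x = y := by
  rcases Relation.reflTransGen_iff_eq_or_transGen.mp hxy with h | h
  · exact h.symm
  · rcases Relation.reflTransGen_iff_eq_or_transGen.mp hyx with h2 | h2
    · exact h2
    · exact absurd (h.trans h2) (hT.acyclic x)

private lemma st1_wfT [Finite V] (hT : IsSETournament adj) :
    WellFounded (Relation.TransGen adj) := by
  haveI : IsTrans V (Relation.TransGen adj) := ⟨fun _ _ _ => Relation.TransGen.trans⟩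
  haveI : IsIrrefl V (Relation.TransGen adj) := ⟨hT.acyclic⟩
  exact Finite.wellFounded_of_trans_of_irrefl _

private lemma st1_wfA [Finite V] (hT : IsSETournament adj) : WellFounded adj :=
  Subrelation.wf (fun h => Relation.TransGen.single h) (st1_wfT hT)

private lemma st1_reach [Finite V] (hT : IsSETournament adj) {C : V → V}
    (hC : IsBracket adj C) (v : V) : Relation.ReflTransGen adj (C v) v := by
  refine (st1_wfA hT).induction (C := fun v => Relation.ReflTransGen adj (C v) v) v ?_
  intro v ih
  by_cases hv : IsPlayer adj v
  · rw [hC.player_fix v hv]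
  · obtain ⟨u, hu, he⟩ := hC.match_pred v hv
    rw [he]
    exact (ih u hu).tail hu

private lemma st1_memPS [Finite V] (hT : IsSETournament adj) {C : V → V}
    (hC : IsBracket adj C) (v : V) : C v ∈ playerSet adj v :=
  ⟨hC.toPlayer v, st1_reach hT hC v⟩

private lemma st1_prefix [Finite V] (hT : IsSETournament adj) {C : V → V}
    (hC : IsBracket adj C) {α y : V} (hαy : Relation.ReflTransGen adj α y) :
    ∀ x, Relation.ReflTransGen adj y x → C x = α → C y = α := by
  intro x
  refine (st1_wfA hT).induction
    (C := fun x => Relation.ReflTransGen adj y x → C x = α → C y = α) x ?_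
  intro x ih hyx hCx
  by_cases hxy : x = y
  · rw [← hxy]; exact hCx
  have hxm : IsMatch adj x := by
    rcases hyx.cases_tail with h | ⟨c, _, hc⟩
    · exact absurd h hxy
    · exact fun hP => hP c hc
  obtain ⟨u, hu, he⟩ := hC.match_pred x hxm
  have hCu : C u = α := by rw [← he]; exact hCx
  have hαu : Relation.ReflTransGen adj α u := by
    rw [← hCu]; exact st1_reach hT hC u
  rcases st1_total hT hαy hαu with hyu | huy
  · exact ih u hu hyu hCu
  · rcases huy.cases_head with h | ⟨z, hz, hzy⟩
    · rw [← h]; exact hCu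
    · have hzx : z = x := hT.out_unique hz hu
      rw [hzx] at hzy
      exact absurd (st1_antisymm hT hzy hyx) hxy

private lemma st1_fav [Finite V] (hT : IsSETournament adj) {B₀ : V → V}
    (hB₀ : IsBracket adj B₀) {a : V} (ha : IsPlayer adj a) :
    IsBracket adj (favBracket adj B₀ a) := by
  classical
  constructor
  · intro v
    by_cases h : a ∈ playerSet adj v
    · simpa [favBracket, h] using ha
    · simpa [favBracket, h] using hB₀.toPlayer v
  · intro v hv
    by_cases h : a ∈ playerSet adj v
    · have hav : a = v := by
        rcases h.2.cases_tail with he | ⟨c, _, hc⟩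
        · exact he.symm
        · exact absurd hc (hv c)
      show (if a ∈ playerSet adj v then a else B₀ v) = v
      rw [if_pos h]; exact hav
    · simp [favBracket, h, hB₀.player_fix v hv]
  · intro x hx
    by_cases h : a ∈ playerSet adj x
    · have hne : x ≠ a := fun he => hx (he ▸ h.1)
      rcases h.2.cases_tail with he | ⟨u, hau, hux⟩
      · exact absurd he hne
      · refine ⟨u, hux, ?_⟩
        have hu : a ∈ playerSet adj u := ⟨h.1, hau⟩
        simp [favBracket, h, hu]
    · obtain ⟨u, hux, he⟩ := hB₀.match_pred x hx
      have hu : a ∉ playerSet adj u := fun hc => h ⟨hc.1, hc.2.tail hux⟩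
      refine ⟨u, hux, ?_⟩
      simp [favBracket, h, hu, he]

variable [Fintype V]

open Classical in
private noncomputable def st1_MF (adj : V → V → Prop) : Finset V :=
  Finset.univ.filter (fun x => IsMatch adj x)

open Classical in
private noncomputable def st1_w (adj : V → V → Prop) (σ : V → ℝ) (C : V → V) (a : V) : ℝ :=
  ∑ x ∈ st1_MF adj, if C x = a then σ x else 0

open Classical in
private noncomputable def st1_o (adj : V → V → Prop) (σ : V → ℝ) (B₀ C : V → V) (a : V) : ℝ :=
  ∑ x ∈ st1_MF adj, if a ∉ playerSet adj x ∧ C x = B₀ x then σ x else 0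

private lemma st1_mem_MF {x : V} : x ∈ st1_MF adj ↔ IsMatch adj x := by
  classical
  simp [st1_MF]

private lemma st1_row (hT : IsSETournament adj) (σ : V → ℝ) (B₀ : V → V) {C : V → V}
    (hC : IsBracket adj C) (a : V) :
    score adj σ (favBracket adj B₀ a) C = st1_w adj σ C a + st1_o adj σ B₀ C a := by
  classical
  have hset : {x | IsMatch adj x ∧ favBracket adj B₀ a x = C x}
      = ↑((st1_MF adj).filter (fun x => favBracket adj B₀ a x = C x)) := by
    ext x; simp [st1_MF]
  rw [score, hset, finsum_mem_coe_finset, Finset.sum_filter]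
  rw [st1_w, st1_o, ← Finset.sum_add_distrib]
  refine Finset.sum_congr rfl ?_
  intro x hx
  by_cases hmem : a ∈ playerSet adj x
  · have hfav : favBracket adj B₀ a x = a := by simp [favBracket, hmem]
    rw [hfav]
    by_cases hca : C x = a
    · rw [if_pos hca.symm, if_pos hca, if_neg (fun h => h.1 hmem), add_zero]
    · rw [if_neg (fun h => hca h.symm), if_neg hca, if_neg (fun h => h.1 hmem), add_zero]
  · have hfav : favBracket adj B₀ a x = B₀ x := by simp [favBracket, hmem]
    have hca : C x ≠ a := fun h => hmem (h ▸ st1_memPS hT hC x)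
    rw [hfav, if_neg hca, zero_add]
    by_cases hcb : C x = B₀ x
    · rw [if_pos hcb.symm, if_pos ⟨hmem, hcb⟩]
    · rw [if_neg (fun h => hcb h.symm), if_neg (fun h => hcb h.2)]

private lemma st1_winlt (hT : IsSETournament adj) {σ : V → ℝ} (hσ : IsScoring adj σ)
    {C C' : V → V} (hC : IsBracket adj C) (hC' : IsBracket adj C') {α x₀ : V}
    (hx₀ : IsMatch adj x₀) (h1 : C x₀ = α) (h2 : C' x₀ ≠ α) :
    st1_w adj σ C' α < st1_w adj σ C α := by
  classical
  have e1 : st1_w adj σ C α = ∑ x ∈ (st1_MF adj).filter (fun x => C x = α), σ x :=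
    (Finset.sum_filter _ _).symm
  have e2 : st1_w adj σ C' α = ∑ x ∈ (st1_MF adj).filter (fun x => C' x = α), σ x :=
    (Finset.sum_filter _ _).symm
  rw [e1, e2]
  have hαx₀ : Relation.ReflTransGen adj α x₀ := h1 ▸ st1_reach hT hC x₀
  refine Finset.sum_lt_sum_of_subset ?_ (i := x₀) ?_ ?_ ?_ ?_
  · intro x hxmem
    rw [Finset.mem_filter] at hxmem ⊢
    obtain ⟨hxM, hC'x⟩ := hxmem
    refine ⟨hxM, ?_⟩
    have hαx : Relation.ReflTransGen adj α x := hC'x ▸ st1_reach hT hC' x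
    rcases st1_total hT hαx hαx₀ with h | h
    · exact st1_prefix hT hC hαx x₀ h h1
    · exact absurd (st1_prefix hT hC' hαx₀ x h hC'x) h2
  · rw [Finset.mem_filter]; exact ⟨st1_mem_MF.mpr hx₀, h1⟩
  · rw [Finset.mem_filter]; exact fun h => h2 h.2
  · exact hσ x₀ hx₀
  · intro j hj _
    exact le_of_lt (hσ j (st1_mem_MF.mp (Finset.mem_filter.mp hj).1))

private lemma st1_case1 (hT : IsSETournament adj) {σ : V → ℝ} (hσ : IsScoring adj σ)
    {B₀ B B' : V → V} {a₀ : V} (hB : IsBracket adj B) (hB' : IsBracket adj B')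
    (hH : ∀ a, IsPlayer adj a → a ≠ a₀ →
      score adj σ (favBracket adj B₀ a) B = score adj σ (favBracket adj B₀ a) B')
    {x₀ : V} (hx₀m : IsMatch adj x₀) (hx₀ : B x₀ ≠ B' x₀)
    (hmin : ∀ x, IsMatch adj x → B x ≠ B' x → Relation.ReflTransGen adj x₀ x)
    (hα : B x₀ ≠ a₀) : False := by
  classical
  set α := B x₀ with hαdef
  have hαp : IsPlayer adj α := hB.toPlayer x₀
  have hrow := hH α hαp hα
  rw [st1_row hT σ B₀ hB α, st1_row hT σ B₀ hB' α] at hrow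
  have hαx₀ : Relation.ReflTransGen adj α x₀ := st1_reach hT hB x₀
  have ho : st1_o adj σ B₀ B α = st1_o adj σ B₀ B' α := by
    refine Finset.sum_congr rfl ?_
    intro x hx
    by_cases hd : B x = B' x
    · rw [hd]
    · have hm : IsMatch adj x := st1_mem_MF.mp hx
      have hmem : α ∈ playerSet adj x := ⟨hαp, hαx₀.trans (hmin x hm hd)⟩
      rw [if_neg (fun hc => hc.1 hmem), if_neg (fun hc => hc.1 hmem)]
  have hw : st1_w adj σ B' α < st1_w adj σ B α :=
    st1_winlt hT hσ hB hB' hx₀m rfl (fun h => hx₀ h.symm)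
  linarith

private lemma st1_case2 (hT : IsSETournament adj) {σ : V → ℝ} (hσ : IsScoring adj σ)
    {B₀ B B' : V → V} {a₀ : V} (hB : IsBracket adj B) (hB' : IsBracket adj B')
    (hH : ∀ a, IsPlayer adj a → a ≠ a₀ →
      score adj σ (favBracket adj B₀ a) B = score adj σ (favBracket adj B₀ a) B')
    {x₀ : V} (hx₀m : IsMatch adj x₀) (hx₀ : B x₀ ≠ B' x₀)
    (hna : ¬ Relation.ReflTransGen adj a₀ x₀)
    (hmin : ∀ x, IsMatch adj x → B x ≠ B' x → ¬ Relation.ReflTransGen adj a₀ x →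
      ¬ Relation.TransGen adj x x₀) : False := by
  classical
  set α := B x₀ with hαdef
  set β := B' x₀ with hβdef
  have hαp : IsPlayer adj α := hB.toPlayer x₀
  have hβp : IsPlayer adj β := hB'.toPlayer x₀
  have hαx₀ : Relation.ReflTransGen adj α x₀ := st1_reach hT hB x₀
  have hβx₀ : Relation.ReflTransGen adj β x₀ := st1_reach hT hB' x₀
  have hαa₀ : α ≠ a₀ := fun h => hna (h ▸ hαx₀)
  have hβa₀ : β ≠ a₀ := fun h => hna (h ▸ hβx₀)
  have hrowα := hH α hαp hαa₀
  have hrowβ := hH β hβp hβa₀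
  rw [st1_row hT σ B₀ hB α, st1_row hT σ B₀ hB' α] at hrowα
  rw [st1_row hT σ B₀ hB β, st1_row hT σ B₀ hB' β] at hrowβ
  -- key comparability fact
  have main : ∀ γ, Relation.ReflTransGen adj γ x₀ → ∀ x, IsMatch adj x → B x ≠ B' x →
      γ ∈ playerSet adj x → Relation.ReflTransGen adj x₀ x := by
    intro γ hγ x hm hd hmem
    rcases st1_total hT hγ hmem.2 with h | h
    · exact h
    · have hna' : ¬ Relation.ReflTransGen adj a₀ x := fun hc => hna (hc.trans h)
      rcases Relation.reflTransGen_iff_eq_or_transGen.mp h with he | ht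
      · rw [he]
      · exact absurd ht (hmin x hm hd hna')
  have key : ∀ x, IsMatch adj x → B x ≠ B' x →
      (α ∈ playerSet adj x ↔ β ∈ playerSet adj x) := by
    intro x hm hd
    constructor
    · intro hmem; exact ⟨hβp, hβx₀.trans (main α hαx₀ x hm hd hmem)⟩
    · intro hmem; exact ⟨hαp, hαx₀.trans (main β hβx₀ x hm hd hmem)⟩
  have ho : st1_o adj σ B₀ B α + st1_o adj σ B₀ B' β
      = st1_o adj σ B₀ B' α + st1_o adj σ B₀ B β := by
    unfold st1_o
    rw [← Finset.sum_add_distrib, ← Finset.sum_add_distrib]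
    refine Finset.sum_congr rfl ?_
    intro x hx
    by_cases hd : B x = B' x
    · rw [hd]
    · have hm : IsMatch adj x := st1_mem_MF.mp hx
      have hiff := key x hm hd
      by_cases hmem : α ∈ playerSet adj x
      · have hmem' : β ∈ playerSet adj x := hiff.mp hmem
        rw [if_neg (fun hc => hc.1 hmem), if_neg (fun hc => hc.1 hmem'),
          if_neg (fun hc => hc.1 hmem), if_neg (fun hc => hc.1 hmem')]
      · have hmem' : β ∉ playerSet adj x := fun h => hmem (hiff.mpr h)
        simp only [hmem, hmem', not_false_eq_true, true_and]
        exact add_comm _ _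
  have hwα : st1_w adj σ B' α < st1_w adj σ B α :=
    st1_winlt hT hσ hB hB' hx₀m rfl (fun h => hx₀ h.symm)
  have hwβ : st1_w adj σ B β < st1_w adj σ B' β :=
    st1_winlt hT hσ hB' hB hx₀m rfl hx₀
  linarith

private lemma st1_mainlem (hT : IsSETournament adj) {σ : V → ℝ} (hσ : IsScoring adj σ)
    {B₀ B B' : V → V} {a₀ : V} (hB : IsBracket adj B) (hB' : IsBracket adj B')
    (hH : ∀ a, IsPlayer adj a → a ≠ a₀ →
      score adj σ (favBracket adj B₀ a) B = score adj σ (favBracket adj B₀ a) B') :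
    B = B' := by
  classical
  have hH' : ∀ a, IsPlayer adj a → a ≠ a₀ →
      score adj σ (favBracket adj B₀ a) B' = score adj σ (favBracket adj B₀ a) B :=
    fun a h1 h2 => (hH a h1 h2).symm
  have hmatch : ∀ x, IsMatch adj x → B x = B' x := by
    by_contra hcon
    push_neg at hcon
    obtain ⟨x₁, hm₁, hd₁⟩ := hcon
    by_cases hS : ∃ x, IsMatch adj x ∧ B x ≠ B' x ∧ ¬ Relation.ReflTransGen adj a₀ x
    · obtain ⟨x₂, hx₂, hx₂'⟩ := hS
      obtain ⟨m, hmem, hminS⟩ := (st1_wfT hT).has_min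
        {x | IsMatch adj x ∧ B x ≠ B' x ∧ ¬ Relation.ReflTransGen adj a₀ x} ⟨x₂, hx₂, hx₂'⟩
      exact st1_case2 hT hσ hB hB' hH hmem.1 hmem.2.1 hmem.2.2
        (fun x hm hd hna ht => hminS x ⟨hm, hd, hna⟩ ht)
    · push_neg at hS
      obtain ⟨m, hmem, hminS⟩ := (st1_wfT hT).has_min
        {x | IsMatch adj x ∧ B x ≠ B' x} ⟨x₁, hm₁, hd₁⟩
      have hmin : ∀ x, IsMatch adj x → B x ≠ B' x → Relation.ReflTransGen adj m x := by
        intro x hm hd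
        have h₁ : Relation.ReflTransGen adj a₀ x := hS x hm hd
        have h₂ : Relation.ReflTransGen adj a₀ m := hS m hmem.1 hmem.2
        rcases st1_total hT h₂ h₁ with h | h
        · exact h
        · rcases Relation.reflTransGen_iff_eq_or_transGen.mp h with he | ht
          · rw [he]
          · exact absurd ht (hminS x ⟨hm, hd⟩)
      by_cases hα : B m = a₀
      · have hβ : B' m ≠ a₀ := fun h => hmem.2 (hα.trans h.symm)
        exact st1_case1 hT hσ hB' hB hH' hmem.1 (Ne.symm hmem.2)
          (fun x hm hd => hmin x hm (Ne.symm hd)) hβ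
      · exact st1_case1 hT hσ hB hB' hH hmem.1 hmem.2 hmin hα
  funext v
  by_cases hv : IsPlayer adj v
  · rw [hB.player_fix v hv, hB'.player_fix v hv]
  · exact hmatch v hv

end Statement1Aux

/-- For every single-elimination tournament with `n` players and any
scoring system σ, `dim(T,σ) ≤ n − 1`. -/
theorem statement_1 {V : Type*} [Finite V] (adj : V → V → Prop)
    (hT : IsSETournament adj) (n : ℕ) (hn : (players adj).ncard = n)
    (σ : V → ℝ) (hσ : IsScoring adj σ) :
    dimT adj σ ≤ n - 1 := by
  classical
  letI : Fintype V := Fintype.ofFinite V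
  by_cases hEx : ∃ B, IsBracket adj B
  · obtain ⟨B₀, hB₀⟩ := hEx
    obtain ⟨z, _, _⟩ := hT.unique_sink
    set a₀ := B₀ z with ha₀def
    have ha₀p : IsPlayer adj a₀ := hB₀.toPlayer z
    have ha₀mem : a₀ ∈ players adj := ha₀p
    set 𝓑 : Set (V → V) := (fun a => favBracket adj B₀ a) '' (players adj \ {a₀}) with h𝓑
    have hbr : ∀ B ∈ 𝓑, IsBracket adj B := by
      rintro _ ⟨a, ⟨hap, _⟩, rfl⟩
      exact st1_fav hT hB₀ hap
    have hres : IsResolving adj σ 𝓑 := by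
      intro B B' hB hB' hne
      by_contra hcon
      push_neg at hcon
      refine hne (st1_mainlem hT hσ hB hB' (a₀ := a₀) (B₀ := B₀) ?_)
      intro a hap hna
      exact hcon _ ⟨a, ⟨hap, by simpa using hna⟩, rfl⟩
    have hmemdim : 𝓑.ncard ∈ {k | ∃ 𝓑' : Set (V → V), (∀ B ∈ 𝓑', IsBracket adj B) ∧
        IsResolving adj σ 𝓑' ∧ 𝓑'.ncard = k} := ⟨𝓑, hbr, hres, rfl⟩
    have h1 : dimT adj σ ≤ 𝓑.ncard := Nat.sInf_le hmemdim
    have h2 : 𝓑.ncard ≤ n - 1 := by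
      calc 𝓑.ncard ≤ (players adj \ {a₀}).ncard := Set.ncard_image_le (Set.toFinite _)
        _ = (players adj).ncard - 1 := Set.ncard_diff_singleton_of_mem ha₀mem
        _ = n - 1 := by rw [hn]
    exact le_trans h1 h2
  · have h0 : (0 : ℕ) ∈ {k | ∃ 𝓑 : Set (V → V), (∀ B ∈ 𝓑, IsBracket adj B) ∧
        IsResolving adj σ 𝓑 ∧ 𝓑.ncard = k} := by
      refine ⟨∅, fun B hB => absurd hB (Set.notMem_empty B), ?_, Set.ncard_empty _⟩
      intro B B' hB _ _
      exact absurd ⟨B, hB⟩ hEx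
    exact le_trans (Nat.sInf_le h0) (Nat.zero_le _)


end SETour
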